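/- Let V₁, V₂ be sets with maps h₁ : V₁ → ℝ, h₂ : V₂ → ℝ (heights). Suppose there exist constants A > 0 and K > 0 such that for all reals x ≤ y, the number of points of V₁ with height in [x,y] is at most the number of points of V₂ with height in [x−K, y+K], and vice versa. If moreover both counting functions differ from (2/β)(y−x) by at most A (with K = Aβ/2), then there exists a bijection χ : V₁ → V₂ that is K-coarsely height preserving: |h₂(χ(v)) − h₁(v)| ≤ K for all v ∈ V₁. -/

import Mathlib

open Set Function

/-- Schröder–Bernstein with control: the bijection agrees with `f` or is a section of `g`. -/
lemma sb_with_prop {α β : Type*} {f : α → β} {g : β → α} (hf : Function.Injective f)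
    (hg : Function.Injective g) :
    ∃ h : α → β, Function.Bijective h ∧ ∀ a, h a = f a ∨ g (h a) = a := by
  classical
  cases' isEmpty_or_nonempty β with hβ hβ
  · have hα : IsEmpty α := Function.isEmpty f
    exact ⟨f, ⟨hf, fun b => (hβ.false b).elim⟩, fun a => (hα.false a).elim⟩
  set F : Set α →o Set α :=
    { toFun := fun s => (g '' (f '' s)ᶜ)ᶜ
      monotone' := fun s t hst =>
        compl_subset_compl.mpr <| image_mono <| compl_subset_compl.mpr <| image_mono hst }
  set s : Set α := F.lfp
  have hs : (g '' (f '' s)ᶜ)ᶜ = s := F.map_lfp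
  have hns : g '' (f '' s)ᶜ = sᶜ := compl_injective (by simp [hs])
  set g' := invFun g
  have g'g : LeftInverse g' g := leftInverse_invFun hg
  have hg'ns : g' '' sᶜ = (f '' s)ᶜ := by rw [← hns, g'g.image_image]
  set h : α → β := s.piecewise f g'
  have hsurj : Surjective h := by
    rw [← range_eq_univ, range_piecewise, hg'ns, union_compl_self]
  have hinj : Injective h := by
    refine (injective_piecewise_iff _).2 ⟨hf.injOn, ?_, ?_⟩
    · intro x hx y hy hxy
      obtain ⟨x', _, rfl⟩ : x ∈ g '' (f '' s)ᶜ := by rwa [hns]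
      obtain ⟨y', _, rfl⟩ : y ∈ g '' (f '' s)ᶜ := by rwa [hns]
      rw [g'g _, g'g _] at hxy
      rw [hxy]
    · intro x hx y hy hxy
      obtain ⟨y', hy', rfl⟩ : y ∈ g '' (f '' s)ᶜ := by rwa [hns]
      rw [g'g _] at hxy
      exact hy' ⟨x, hx, hxy⟩
  refine ⟨h, ⟨hinj, hsurj⟩, fun a => ?_⟩
  by_cases ha : a ∈ s
  · exact Or.inl (Set.piecewise_eq_of_mem _ _ _ ha)
  · right
    obtain ⟨b, _, rfl⟩ : a ∈ g '' (f '' s)ᶜ := by rwa [hns]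
    show g (s.piecewise f g' (g b)) = g b
    rw [Set.piecewise_eq_of_notMem _ _ _ ha, g'g b]

/-- Hall's theorem applied to the coarse height matching problem: produces an injection
moving heights by at most `K`. -/
lemma coarse_injection {V₁ V₂ : Type*} (h₁ : V₁ → ℝ) (h₂ : V₂ → ℝ) (K : ℝ) (hK : 0 < K)
    (hfin₁ : ∀ x y : ℝ, {v : V₁ | h₁ v ∈ Set.Icc x y}.Finite)
    (hfin₂ : ∀ x y : ℝ, {w : V₂ | h₂ w ∈ Set.Icc x y}.Finite)
    (hcount₁ : ∀ x y : ℝ, x ≤ y →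
      {v : V₁ | h₁ v ∈ Set.Icc x y}.ncard ≤ {w : V₂ | h₂ w ∈ Set.Icc (x - K) (y + K)}.ncard) :
    ∃ f : V₁ → V₂, Function.Injective f ∧ ∀ v, |h₂ (f v) - h₁ v| ≤ K := by
  classical
  set t : V₁ → Finset V₂ := fun v => (hfin₂ (h₁ v - K) (h₁ v + K)).toFinset with ht_def
  have ht : ∀ v w, w ∈ t v ↔ h₁ v - K ≤ h₂ w ∧ h₂ w ≤ h₁ v + K := by
    intro v w
    simp [ht_def, Set.mem_Icc]
  have hall : ∀ n (s : Finset V₁), s.card = n → s.card ≤ (s.biUnion t).card := by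
    intro n
    induction n using Nat.strong_induction_on with
    | _ n ih =>
      intro s hscard
      rcases s.eq_empty_or_nonempty with rfl | hne
      · simp
      obtain ⟨u₀, hu₀, hmin⟩ := s.exists_min_image h₁ hne
      obtain ⟨u₁, hu₁, hmax⟩ := s.exists_max_image h₁ hne
      by_cases hsplit : ∃ u ∈ s, (∃ v ∈ s, h₁ u < h₁ v) ∧
          ∀ v ∈ s, h₁ v ≤ h₁ u ∨ h₁ u + 2 * K < h₁ v
      · -- split case: a gap of more than 2K
        obtain ⟨u, hu, ⟨v', hv', hv'gt⟩, hgap⟩ := hsplit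
        set s₁ := s.filter (fun v => h₁ v ≤ h₁ u) with hs₁def
        set s₂ := s.filter (fun v => ¬ h₁ v ≤ h₁ u) with hs₂def
        have hdisj : Disjoint s₁ s₂ := Finset.disjoint_filter_filter_not s s _
        have hunion : s₁ ∪ s₂ = s := Finset.filter_union_filter_not_eq _ s
        have hcards : s₁.card + s₂.card = s.card := by
          rw [← Finset.card_union_of_disjoint hdisj, hunion]
        have hv'2 : v' ∈ s₂ := Finset.mem_filter.2 ⟨hv', not_le.2 hv'gt⟩
        have hu1 : u ∈ s₁ := Finset.mem_filter.2 ⟨hu, le_refl _⟩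
        have hc1 : s₁.card < n := by
          have : s₂.card ≠ 0 := Finset.card_ne_zero_of_mem hv'2
          omega
        have hc2 : s₂.card < n := by
          have : s₁.card ≠ 0 := Finset.card_ne_zero_of_mem hu1
          omega
        have ihs₁ := ih s₁.card hc1 s₁ rfl
        have ihs₂ := ih s₂.card hc2 s₂ rfl
        have hbd : Disjoint (s₁.biUnion t) (s₂.biUnion t) := by
          rw [Finset.disjoint_left]
          intro w hw1 hw2
          obtain ⟨a, ha, haw⟩ := Finset.mem_biUnion.1 hw1
          obtain ⟨b, hb, hbw⟩ := Finset.mem_biUnion.1 hw2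
          have ha' := (Finset.mem_filter.1 ha).2
          have hb' := (Finset.mem_filter.1 hb).2
          have h1 := (ht a w).1 haw
          have h2 := (ht b w).1 hbw
          have hbig : h₁ u + 2 * K < h₁ b := by
            rcases hgap b (Finset.mem_filter.1 hb).1 with h | h
            · exact absurd h hb'
            · exact h
          linarith
        calc s.card = s₁.card + s₂.card := hcards.symm
          _ ≤ (s₁.biUnion t).card + (s₂.biUnion t).card := add_le_add ihs₁ ihs₂
          _ = ((s₁.biUnion t) ∪ (s₂.biUnion t)).card :=
              (Finset.card_union_of_disjoint hbd).symm
          _ = (s.biUnion t).card := by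
              congr 1
              rw [← hunion]
              ext w
              simp [Finset.mem_biUnion, Finset.mem_union, or_and_right, exists_or]
      · -- connected case
        push_neg at hsplit
        have hconn : ∀ u ∈ s, h₁ u < h₁ u₁ →
            ∃ v ∈ s, h₁ u < h₁ v ∧ h₁ v ≤ h₁ u + 2 * K := by
          intro u hu hlt
          exact hsplit u hu ⟨u₁, hu₁, hlt⟩
        set m := h₁ u₀ with hm
        set M := h₁ u₁ with hM
        have hmM : m ≤ M := hmin u₁ hu₁
        -- s.card ≤ ncard of slab
        have hstep1 : s.card ≤ {v : V₁ | h₁ v ∈ Set.Icc m M}.ncard := by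
          rw [Set.ncard_eq_toFinset_card _ (hfin₁ m M)]
          apply Finset.card_le_card
          intro v hv
          rw [Set.Finite.mem_toFinset]
          exact ⟨hmin v hv, hmax v hv⟩
        have hstep2 := hcount₁ m M hmM
        -- the target slab is contained in the biUnion
        have hstep3 : {w : V₂ | h₂ w ∈ Set.Icc (m - K) (M + K)}.ncard ≤ (s.biUnion t).card := by
          rw [Set.ncard_eq_toFinset_card _ (hfin₂ (m - K) (M + K))]
          apply Finset.card_le_card
          intro w hw
          rw [Set.Finite.mem_toFinset] at hw
          obtain ⟨hw1, hw2⟩ := hw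
          -- find v ∈ s with |h₂ w - h₁ v| ≤ K
          have hne' : (s.filter (fun v => h₁ v ≤ h₂ w + K)).Nonempty :=
            ⟨u₀, Finset.mem_filter.2 ⟨hu₀, by rw [← hm]; linarith⟩⟩
          obtain ⟨v, hv, hvmax⟩ := (s.filter (fun v => h₁ v ≤ h₂ w + K)).exists_max_image h₁ hne'
          have hvs : v ∈ s := (Finset.mem_filter.1 hv).1
          have hvle : h₁ v ≤ h₂ w + K := (Finset.mem_filter.1 hv).2
          have hvge : h₂ w - K ≤ h₁ v := by
            by_contra hcon
            push_neg at hcon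
            have hvlt : h₁ v < M := by linarith
            obtain ⟨v', hv's, hgt, hle⟩ := hconn v hvs hvlt
            have : v' ∈ s.filter (fun v => h₁ v ≤ h₂ w + K) :=
              Finset.mem_filter.2 ⟨hv's, by linarith⟩
            exact absurd (hvmax v' this) (not_le.2 hgt)
          exact Finset.mem_biUnion.2 ⟨v, hvs, (ht v w).2 ⟨by linarith, by linarith⟩⟩
        omega
  obtain ⟨f, hfinj, hft⟩ :=
    (Finset.all_card_le_biUnion_card_iff_exists_injective t).1 (fun s => hall s.card s rfl)
  refine ⟨f, hfinj, fun v => ?_⟩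
  have := (ht v (f v)).1 (hft v)
  rw [abs_le]
  constructor <;> linarith [this.1, this.2]

/-- Matching counting functions on height intervals yield a K-coarsely height preserving
bijection. -/
theorem coarse_height_bijection {V₁ V₂ : Type*} (h₁ : V₁ → ℝ) (h₂ : V₂ → ℝ)
    (A K β : ℝ) (hA : 0 < A) (hK : 0 < K) (hβ : 0 < β) (hKA : K = A * β / 2)
    (hfin₁ : ∀ x y : ℝ, {v : V₁ | h₁ v ∈ Set.Icc x y}.Finite)
    (hfin₂ : ∀ x y : ℝ, {w : V₂ | h₂ w ∈ Set.Icc x y}.Finite)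
    (hcount₁ : ∀ x y : ℝ, x ≤ y →
      {v : V₁ | h₁ v ∈ Set.Icc x y}.ncard ≤ {w : V₂ | h₂ w ∈ Set.Icc (x - K) (y + K)}.ncard)
    (hcount₂ : ∀ x y : ℝ, x ≤ y →
      {w : V₂ | h₂ w ∈ Set.Icc x y}.ncard ≤ {v : V₁ | h₁ v ∈ Set.Icc (x - K) (y + K)}.ncard)
    (hdev₁ : ∀ x y : ℝ, x ≤ y →
      |({v : V₁ | h₁ v ∈ Set.Icc x y}.ncard : ℝ) - 2 / β * (y - x)| ≤ A)
    (hdev₂ : ∀ x y : ℝ, x ≤ y →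
      |({w : V₂ | h₂ w ∈ Set.Icc x y}.ncard : ℝ) - 2 / β * (y - x)| ≤ A) :
    ∃ χ : V₁ → V₂, Function.Bijective χ ∧ ∀ v : V₁, |h₂ (χ v) - h₁ v| ≤ K := by
  obtain ⟨f, hfinj, hf⟩ := coarse_injection h₁ h₂ K hK hfin₁ hfin₂ hcount₁
  obtain ⟨g, hginj, hg⟩ := coarse_injection h₂ h₁ K hK hfin₂ hfin₁ hcount₂
  obtain ⟨χ, hbij, hprop⟩ := sb_with_prop hfinj hginj
  refine ⟨χ, hbij, fun v => ?_⟩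
  rcases hprop v with h | h
  · rw [h]; exact hf v
  · have := hg (χ v)
    rw [h] at this
    rw [abs_sub_comm]
    exact this
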